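/- arXiv:2208.12998 — 4 statements merged into one kernel-verified Lean document; each statement's English description precedes it below -/
import Mathlib

section
/- Fix a nonzero real number λ and integers m ≥ r ≥ 0. Let θ be the operator on ℝ[[x]] given by (θ f)(x) = x·f'(x), and let (θ)_{m−r,λ} denote the composite operator θ∘(θ − λ·id)∘···∘(θ − (m−r−1)λ·id) (the identity operator when m = r). Then for every f ∈ ℝ[[x]]: (θ)_{m−r,λ}(x^r · f^{(r)}(x)) = Σ_{l=r}^{m} {m brace l}_{r,λ} · x^l · f^{(l)}(x), where {m brace l}_{r,λ} denotes the degenerate r-Stirling number of the second kind {(m−r)+r brace (l−r)+r}_{r,λ} and f^{(l)} is the l-th formal derivative of f. -/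
open Finset PowerSeries

noncomputable section

/-- The degenerate falling factorial `(x)_{n,λ} = x(x-λ)⋯(x-(n-1)λ)`. -/
def dff (lam x : ℝ) (n : ℕ) : ℝ := ∏ i ∈ Finset.range n, (x - i * lam)

/-- The ordinary falling factorial `(x)_n = x(x-1)⋯(x-n+1)`. -/
def ff (x : ℝ) (n : ℕ) : ℝ := ∏ i ∈ Finset.range n, (x - i)

/-- The operator `θ` on `ℝ[[x]]` given by `(θ f)(x) = x·f'(x)`. -/
def theta (f : PowerSeries ℝ) : PowerSeries ℝ := PowerSeries.X * f.derivativeFun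

/-- The composite operator `(θ)_{m,λ} = θ∘(θ-λ)∘⋯∘(θ-(m-1)λ)`, the identity when `m = 0`. -/
def thetaFall (lam : ℝ) : ℕ → PowerSeries ℝ → PowerSeries ℝ
  | 0 => fun f => f
  | n + 1 => fun f => thetaFall lam n (theta f - ((n : ℝ) * lam) • f)

lemma derivativeFun_sub' (f g : PowerSeries ℝ) :
    derivativeFun (f - g) = derivativeFun f - derivativeFun g := by
  have h := derivativeFun_add (f - g) g
  rw [sub_add_cancel] at h
  rw [h]; abel

lemma theta_add (f g : PowerSeries ℝ) : theta (f + g) = theta f + theta g := by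
  simp [theta, derivativeFun_add, mul_add]

lemma theta_smul (c : ℝ) (f : PowerSeries ℝ) : theta (c • f) = c • theta f := by
  simp [theta, derivativeFun_smul, mul_smul_comm]

lemma theta_sub (f g : PowerSeries ℝ) : theta (f - g) = theta f - theta g := by
  simp [theta, derivativeFun_sub', mul_sub]

lemma theta_zero : theta (0 : PowerSeries ℝ) = 0 := by
  have h : derivativeFun (0 : PowerSeries ℝ) = 0 := by
    ext n; change coeff n (derivative ℝ _) = _; rw [coeff_derivative]; simp
  simp [theta, h]

lemma theta_sum {ι : Type*} (s : Finset ι) (g : ι → PowerSeries ℝ) :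
    theta (∑ i ∈ s, g i) = ∑ i ∈ s, theta (g i) := by
  classical
  induction s using Finset.induction with
  | empty => simp [theta_zero]
  | @insert a s h ih => simp [Finset.sum_insert h, theta_add, ih]

lemma thetaFall_add (lam : ℝ) (n : ℕ) : ∀ f g : PowerSeries ℝ,
    thetaFall lam n (f + g) = thetaFall lam n f + thetaFall lam n g := by
  induction n with
  | zero => intro f g; rfl
  | succ n ih =>
    intro f g
    show thetaFall lam n _ = thetaFall lam n _ + thetaFall lam n _
    rw [theta_add, smul_add]
    rw [show theta f + theta g - (((n : ℝ) * lam) • f + ((n : ℝ) * lam) • g)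
        = (theta f - ((n : ℝ) * lam) • f) + (theta g - ((n : ℝ) * lam) • g) by abel]
    exact ih _ _

lemma thetaFall_smul (lam : ℝ) (n : ℕ) : ∀ (c : ℝ) (f : PowerSeries ℝ),
    thetaFall lam n (c • f) = c • thetaFall lam n f := by
  induction n with
  | zero => intro c f; rfl
  | succ n ih =>
    intro c f
    show thetaFall lam n _ = c • thetaFall lam n _
    rw [theta_smul, smul_comm ((n : ℝ) * lam) c, ← smul_sub]
    exact ih _ _

lemma thetaFall_sub (lam : ℝ) (n : ℕ) (f g : PowerSeries ℝ) :
    thetaFall lam n (f - g) = thetaFall lam n f - thetaFall lam n g := by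
  rw [sub_eq_add_neg, ← neg_one_smul ℝ g, thetaFall_add, thetaFall_smul, neg_one_smul,
    ← sub_eq_add_neg]

lemma thetaFall_theta (lam : ℝ) (n : ℕ) : ∀ f : PowerSeries ℝ,
    thetaFall lam n (theta f) = theta (thetaFall lam n f) := by
  induction n with
  | zero => intro f; rfl
  | succ n ih =>
    intro f
    show thetaFall lam n _ = theta (thetaFall lam n _)
    rw [← ih, ← theta_smul, ← theta_sub]

lemma thetaFall_succ' (lam : ℝ) (n : ℕ) (f : PowerSeries ℝ) :
    thetaFall lam (n + 1) f
      = theta (thetaFall lam n f) - ((n : ℝ) * lam) • thetaFall lam n f := by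
  show thetaFall lam n _ = _
  rw [thetaFall_sub, thetaFall_smul, thetaFall_theta]

lemma X_mul_derivativeFun_X_pow (l : ℕ) :
    (X : PowerSeries ℝ) * derivativeFun ((X : PowerSeries ℝ) ^ l)
      = (l : ℝ) • (X : PowerSeries ℝ) ^ l := by
  induction l with
  | zero => simp [pow_zero, derivativeFun_one]
  | succ l ih =>
    have hX : derivativeFun (X : PowerSeries ℝ) = 1 := by
      ext n
      change coeff n (derivative ℝ _) = _; rw [coeff_derivative]
      rcases n with _ | n <;> simp [coeff_one, coeff_X]
    rw [pow_succ, derivativeFun_mul, hX, smul_eq_mul, smul_eq_mul, mul_one, mul_add]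
    rw [ih, mul_smul_comm, mul_comm ((X : PowerSeries ℝ) ^ l) X]
    push_cast
    rw [add_smul, one_smul]
    abel


lemma theta_X_pow_mul (l : ℕ) (g : PowerSeries ℝ) :
    theta ((X : PowerSeries ℝ) ^ l * g)
      = (l : ℝ) • ((X : PowerSeries ℝ) ^ l * g) + (X : PowerSeries ℝ) ^ (l + 1) * derivativeFun g := by
  unfold theta
  rw [derivativeFun_mul, smul_eq_mul, smul_eq_mul, mul_add]
  rw [show (X : PowerSeries ℝ) * (g * derivativeFun ((X:PowerSeries ℝ)^l))
      = g * ((X : PowerSeries ℝ) * derivativeFun ((X:PowerSeries ℝ)^l)) by ring]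
  rw [X_mul_derivativeFun_X_pow, mul_smul_comm, mul_comm g ((X:PowerSeries ℝ)^l)]
  rw [show (X : PowerSeries ℝ) * (X ^ l * derivativeFun g) = X ^ (l+1) * derivativeFun g by
    rw [pow_succ]; ring]
  abel

lemma ff_succ (x : ℝ) (k : ℕ) : ff x (k + 1) = ff x k * (x - k) := Finset.prod_range_succ _ _

lemma ff_nat_eq_zero {k j : ℕ} (h : k < j) : ff (k : ℝ) j = 0 :=
  Finset.prod_eq_zero (Finset.mem_range.2 h) (by simp)

lemma ff_nat_ne_zero (k : ℕ) : ff (k : ℝ) k ≠ 0 := by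
  rw [ff, Finset.prod_ne_zero_iff]
  intro i hi
  have hik : i < k := Finset.mem_range.1 hi
  have : (i : ℝ) < (k : ℝ) := by exact_mod_cast hik
  exact sub_ne_zero.2 (ne_of_gt this)

lemma ff_indep (n : ℕ) (d : ℕ → ℝ)
    (h : ∀ x : ℝ, ∑ k ∈ Finset.range (n + 1), d k * ff x k = 0) :
    ∀ k ≤ n, d k = 0 := by
  intro k
  induction k using Nat.strong_induction_on with
  | _ k ih =>
    intro hk
    have h0 := h (k : ℝ)
    rw [Finset.sum_eq_single k] at h0
    · rcases mul_eq_zero.1 h0 with h1 | h1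
      · exact h1
      · exact absurd h1 (ff_nat_ne_zero k)
    · intro j hj hne
      rcases lt_or_gt_of_ne hne with hlt | hgt
      · rw [ih j hlt (le_trans hlt.le hk)]; ring
      · rw [ff_nat_eq_zero hgt]; ring
    · intro hk'
      exact absurd (Finset.mem_range.2 (Nat.lt_succ_of_le hk)) hk'


lemma S_rec (lam : ℝ) (r : ℕ) (S : ℕ → ℕ → ℝ)
    (hS : ∀ (n : ℕ) (x : ℝ), dff lam (x + r) n = ∑ k ∈ Finset.range (n + 1), S n k * ff x k)
    (n : ℕ) :
    ∀ k ≤ n + 1, S (n + 1) k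
      = (if 1 ≤ k then S n (k - 1) else 0)
        + (if k ≤ n then ((k : ℝ) + r - n * lam) * S n k else 0) := by
  set E : ℕ → ℝ := fun k => (if 1 ≤ k then S n (k - 1) else 0)
      + (if k ≤ n then ((k : ℝ) + r - n * lam) * S n k else 0) with hE
  have hEsum : ∀ x : ℝ, ∑ k ∈ Finset.range (n + 2), E k * ff x k
      = dff lam (x + r) (n + 1) := by
    intro x
    have hd : dff lam (x + r) (n + 1) = dff lam (x + r) n * (x + r - n * lam) := by
      rw [dff, Finset.prod_range_succ]; rfl
    rw [hd, hS n x, Finset.sum_mul]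
    have hsplit : ∀ k, E k * ff x k
        = (if 1 ≤ k then S n (k - 1) else 0) * ff x k
          + (if k ≤ n then ((k : ℝ) + r - n * lam) * S n k else 0) * ff x k := by
      intro k; rw [hE]; ring
    rw [Finset.sum_congr rfl (fun k _ => hsplit k), Finset.sum_add_distrib]
    have hA : ∑ k ∈ Finset.range (n + 2), (if 1 ≤ k then S n (k - 1) else 0) * ff x k
        = ∑ k ∈ Finset.range (n + 1), S n k * ff x (k + 1) := by
      rw [Finset.sum_range_succ' (fun k => (if 1 ≤ k then S n (k - 1) else 0) * ff x k) (n + 1)]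
      simp
    have hB : ∑ k ∈ Finset.range (n + 2),
          (if k ≤ n then ((k : ℝ) + r - n * lam) * S n k else 0) * ff x k
        = ∑ k ∈ Finset.range (n + 1), ((k : ℝ) + r - n * lam) * S n k * ff x k := by
      rw [Finset.sum_range_succ]
      rw [if_neg (by omega : ¬ (n + 1 ≤ n)), zero_mul, add_zero]
      refine Finset.sum_congr rfl fun k hk => ?_
      rw [if_pos (Nat.lt_succ_iff.1 (Finset.mem_range.1 hk))]
    rw [hA, hB, ← Finset.sum_add_distrib]
    refine Finset.sum_congr rfl fun k hk => ?_
    rw [ff_succ]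
    ring
  intro k hk
  have key : ∀ x : ℝ, ∑ j ∈ Finset.range (n + 1 + 1), (S (n + 1) j - E j) * ff x j = 0 := by
    intro x
    have : ∀ j, (S (n + 1) j - E j) * ff x j = S (n + 1) j * ff x j - E j * ff x j := by
      intro j; ring
    rw [Finset.sum_congr rfl (fun j _ => this j), Finset.sum_sub_distrib, ← hS (n + 1) x,
      hEsum x, sub_self]
  have h0 := ff_indep (n + 1) _ key k hk
  show S (n + 1) k = E k
  linarith


lemma main_aux (lam : ℝ) (r : ℕ) (S : ℕ → ℕ → ℝ)
    (hS : ∀ (n : ℕ) (x : ℝ), dff lam (x + r) n = ∑ k ∈ Finset.range (n + 1), S n k * ff x k)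
    (f : PowerSeries ℝ) (n : ℕ) :
    thetaFall lam n ((X : PowerSeries ℝ) ^ r * (derivativeFun (R := ℝ))^[r] f)
      = ∑ k ∈ Finset.range (n + 1),
          S n k • ((X : PowerSeries ℝ) ^ (r + k) * (derivativeFun (R := ℝ))^[r + k] f) := by
  set g : ℕ → PowerSeries ℝ :=
      fun k => (X : PowerSeries ℝ) ^ (r + k) * (derivativeFun (R := ℝ))^[r + k] f with hg
  have hS00 : S 0 0 = 1 := by
    have h := hS 0 0
    simp [dff, ff] at h
    linarith
  induction n with
  | zero =>
    show (X : PowerSeries ℝ) ^ r * (derivativeFun (R := ℝ))^[r] f = _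
    rw [Finset.sum_range_one, hS00, one_smul]
    simp
  | succ n ih =>
    have hterm : ∀ k, theta (S n k • g k)
        = S n k • (((r + k : ℕ) : ℝ) • g k + g (k + 1)) := by
      intro k
      rw [theta_smul, hg]
      simp only
      rw [theta_X_pow_mul]
      rw [show r + (k + 1) = (r + k) + 1 from rfl, Function.iterate_succ_apply']
    rw [thetaFall_succ', ih, theta_sum, Finset.smul_sum, ← Finset.sum_sub_distrib]
    have hlhs : ∀ k, theta (S n k • g k) - ((n : ℝ) * lam) • (S n k • g k)
        = (((k : ℝ) + r - n * lam) * S n k) • g k + S n k • g (k + 1) := by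
      intro k
      rw [hterm k, smul_add, smul_smul, smul_smul, add_sub_right_comm, ← sub_smul]
      rw [show S n k * ((r + k : ℕ) : ℝ) - (n : ℝ) * lam * S n k
          = ((k : ℝ) + r - n * lam) * S n k by push_cast; ring]
    rw [Finset.sum_congr rfl (fun k _ => hlhs k), Finset.sum_add_distrib]
    have hrhs : ∑ k ∈ Finset.range (n + 1 + 1), S (n + 1) k • g k
        = ∑ k ∈ Finset.range (n + 2),
            ((if 1 ≤ k then S n (k - 1) else 0) • g k
              + (if k ≤ n then ((k : ℝ) + r - n * lam) * S n k else 0) • g k) := by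
      refine Finset.sum_congr rfl fun k hk => ?_
      rw [S_rec lam r S hS n k (Nat.lt_succ_iff.1 (Finset.mem_range.1 hk)), add_smul]
    rw [hrhs, Finset.sum_add_distrib]
    have h1 : ∑ k ∈ Finset.range (n + 2), (if 1 ≤ k then S n (k - 1) else 0) • g k
        = ∑ k ∈ Finset.range (n + 1), S n k • g (k + 1) := by
      rw [Finset.sum_range_succ' (fun k => (if 1 ≤ k then S n (k - 1) else 0) • g k) (n + 1)]
      simp
    have h2 : ∑ k ∈ Finset.range (n + 2),
          (if k ≤ n then ((k : ℝ) + r - n * lam) * S n k else 0) • g k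
        = ∑ k ∈ Finset.range (n + 1), (((k : ℝ) + r - n * lam) * S n k) • g k := by
      rw [Finset.sum_range_succ]
      rw [if_neg (by omega : ¬ (n + 1 ≤ n)), zero_smul, add_zero]
      refine Finset.sum_congr rfl fun k hk => ?_
      rw [if_pos (Nat.lt_succ_iff.1 (Finset.mem_range.1 hk))]
    rw [h1, h2]
    abel

/-- for `m ≥ r ≥ 0`,
`(θ)_{m-r,λ}(x^r·f^{(r)}) = ∑_{l=r}^{m} {m brace l}_{r,λ} x^l f^{(l)}(x)`,
where `S n k` denotes the degenerate `r`-Stirling number of the second kind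
`{n+r brace k+r}_{r,λ}`, characterized by `(x+r)_{n,λ} = ∑_{k=0}^n S n k (x)_k`;
thus `{m brace l}_{r,λ} = S (m-r) (l-r)`. -/
theorem statement_1 (lam : ℝ) (hlam : lam ≠ 0) (m r : ℕ) (hmr : r ≤ m)
    (S : ℕ → ℕ → ℝ)
    (hS : ∀ (n : ℕ) (x : ℝ), dff lam (x + r) n = ∑ k ∈ Finset.range (n + 1), S n k * ff x k)
    (f : PowerSeries ℝ) :
    thetaFall lam (m - r) (PowerSeries.X ^ r * (derivativeFun (R := ℝ))^[r] f) =
      ∑ l ∈ Finset.Icc r m,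
        S (m - r) (l - r) • (PowerSeries.X ^ l * (derivativeFun (R := ℝ))^[l] f) := by
  rw [← Finset.Ico_add_one_right_eq_Icc, Finset.sum_Ico_eq_sum_range]
  rw [show m + 1 - r = (m - r) + 1 by omega]
  rw [main_aux lam r S hS f (m - r)]
  refine Finset.sum_congr rfl fun k _ => ?_
  rw [Nat.add_sub_cancel_left]
end
end

section
/- Fix a nonzero real number λ and an integer r ≥ 0. Let f(x) = Σ_{m=0}^{d} a_m x^m be a real polynomial with d ≥ r and let g(x) = Σ_{n=0}^{∞} b_n x^n ∈ ℝ[[x]] be a formal power series. Then the following identity holds in ℝ[[x]]: Σ_{m=r}^{d} a_m Σ_{k=r}^{m} {m brace k}_{r,λ} x^k g^{(k)}(x) = Σ_{n=r}^{∞} b_n · C(n,r) · r! · (Σ_{m=r}^{d} a_m (n)_{m−r,λ}) · x^n, where C(n,r) is the usual binomial coefficient, {m brace k}_{r,λ} denotes the degenerate r-Stirling number of the second kind {(m−r)+r brace (k−r)+r}_{r,λ}, and g^{(k)} is the k-th formal derivative of g. -/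
open Finset PowerSeries

noncomputable section

lemma coeff_iter_deriv (g : PowerSeries ℝ) (k n : ℕ) :
    PowerSeries.coeff (R := ℝ) n ((derivativeFun (R := ℝ))^[k] g) =
      PowerSeries.coeff (R := ℝ) (n + k) g * ∏ i ∈ Finset.range k, ((n : ℝ) + k - i) := by
  induction k generalizing n with
  | zero => simp
  | succ k ih =>
    rw [Function.iterate_succ_apply', show ∀ f : PowerSeries ℝ, PowerSeries.coeff (R := ℝ) n f.derivativeFun = PowerSeries.coeff (n + 1) f * (n + 1) from fun f => coeff_derivative f n, ih, prod_range_succ,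
      show n + 1 + k = n + (k+1) from by omega,
      Finset.prod_congr rfl (fun i (_ : i ∈ range k) =>
        show ((↑(n+1):ℝ) + k - i) = ((n:ℝ) + (k+1) - i) from by push_cast; ring)]
    push_cast; ring

lemma coeff_X_pow_mul_iter (g : PowerSeries ℝ) (k n : ℕ) :
    PowerSeries.coeff (R := ℝ) n (PowerSeries.X ^ k * (derivativeFun (R := ℝ))^[k] g) =
      PowerSeries.coeff (R := ℝ) n g * ff (n : ℝ) k := by
  rcases le_or_gt k n with h | h
  · obtain ⟨m, rfl⟩ := Nat.exists_eq_add_of_le h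
    rw [Nat.add_comm k m, PowerSeries.coeff_X_pow_mul, coeff_iter_deriv, ff]
    congr 1
    exact Finset.prod_congr rfl (fun i _ => by push_cast; ring)
  · rw [show ff (n:ℝ) k = 0 from Finset.prod_eq_zero (Finset.mem_range.mpr h) (by simp),
      mul_zero]
    rw [PowerSeries.coeff_mul]
    apply Finset.sum_eq_zero
    intro p hp
    rw [PowerSeries.coeff_X_pow]
    rcases eq_or_ne p.1 k with he | he
    · exfalso; have := Finset.HasAntidiagonal.mem_antidiagonal.mp hp; omega
    · simp [he]

lemma ff_cast (n r : ℕ) : ff (n : ℝ) r = (n.choose r) * (r.factorial) := by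
  have h1 : ff (n:ℝ) r = (n.descFactorial r : ℝ) := by
    rcases le_or_gt r n with h | h
    · rw [Nat.descFactorial_eq_prod_range, Nat.cast_prod, ff]
      refine Finset.prod_congr rfl fun i hi => ?_
      have : i ≤ n := le_trans (Nat.le_of_lt_succ (Nat.lt_succ_of_lt (mem_range.mp hi))) h
      rw [Nat.cast_sub this]
    · rw [Nat.descFactorial_eq_zero_iff_lt.mpr h, ff,
        Finset.prod_eq_zero (Finset.mem_range.mpr h) (by simp)]
      simp
  rw [h1, Nat.descFactorial_eq_factorial_mul_choose]
  push_cast; ring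

lemma ff_add (x : ℝ) (p q : ℕ) : ff x (p + q) = ff x p * ff (x - p) q := by
  rw [ff, ff, ff, Finset.prod_range_add]
  congr 1
  exact Finset.prod_congr rfl fun i _ => by push_cast; ring

/-- for a polynomial `f(x) = ∑_{m=0}^d a_m x^m` with `d ≥ r` and a power series
`g`, `∑_{m=r}^d a_m ∑_{k=r}^m {m brace k}_{r,λ} x^k g^{(k)}(x)
   = ∑_{n=r}^∞ b_n C(n,r) r! (∑_{m=r}^d a_m (n)_{m-r,λ}) x^n`,
where `b_n` is the `n`-th coefficient of `g`, `S n k` denotes the degenerate `r`-Stirling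
number of the second kind `{n+r brace k+r}_{r,λ}`, characterized by
`(x+r)_{n,λ} = ∑_{k=0}^n S n k (x)_k`, so that `{m brace k}_{r,λ} = S (m-r) (k-r)`.
(The right-hand side effectively starts at `n = r` since `C(n,r) = 0` for `n < r`.) -/
theorem statement_3 (lam : ℝ) (hlam : lam ≠ 0) (r : ℕ)
    (S : ℕ → ℕ → ℝ)
    (hS : ∀ (n : ℕ) (x : ℝ), dff lam (x + r) n = ∑ k ∈ Finset.range (n + 1), S n k * ff x k)
    (d : ℕ) (hd : r ≤ d) (a : ℕ → ℝ) (g : PowerSeries ℝ) :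
    ∑ m ∈ Finset.Icc r d, a m •
        ∑ k ∈ Finset.Icc r m,
          S (m - r) (k - r) • (PowerSeries.X ^ k * (derivativeFun (R := ℝ))^[k] g) =
      PowerSeries.mk fun n =>
        (PowerSeries.coeff (R := ℝ) n g) * (n.choose r) * (r.factorial) *
          ∑ m ∈ Finset.Icc r d, a m * dff lam (n : ℝ) (m - r) := by
  ext n
  have key : ∀ m : ℕ, r ≤ m →
      ∑ k ∈ Finset.Icc r m, S (m - r) (k - r) * ff (n : ℝ) k =
        ff (n : ℝ) r * dff lam (n : ℝ) (m - r) := by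
    intro m hm
    have h1 := hS (m - r) ((n : ℝ) - r)
    rw [sub_add_cancel] at h1
    rw [h1, Finset.mul_sum]
    refine Finset.sum_nbij' (fun k => k - r) (fun j => j + r) ?_ ?_ ?_ ?_ ?_
    · intro k hk; simp only [Finset.mem_Icc] at hk; simp only [Finset.mem_range]; omega
    · intro j hj; simp only [Finset.mem_range] at hj; simp only [Finset.mem_Icc]; omega
    · intro k hk; simp only [Finset.mem_Icc] at hk; omega
    · intro j _; omega
    · intro k hk
      simp only [Finset.mem_Icc] at hk
      have hff : ff (n:ℝ) k = ff (n:ℝ) r * ff ((n:ℝ) - r) (k - r) := by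
        rw [← ff_add]; congr 1; omega
      rw [hff]; ring
  simp only [map_sum, map_smul, smul_eq_mul, PowerSeries.coeff_mk, coeff_X_pow_mul_iter]
  rw [Finset.mul_sum]
  refine Finset.sum_congr rfl fun m hm => ?_
  have h2 : ∑ k ∈ Finset.Icc r m, S (m - r) (k - r) * (PowerSeries.coeff (R := ℝ) n g * ff (n : ℝ) k) =
      PowerSeries.coeff (R := ℝ) n g * (ff (n : ℝ) r * dff lam (n : ℝ) (m - r)) := by
    rw [← key m (Finset.mem_Icc.mp hm).1, Finset.mul_sum]
    exact Finset.sum_congr rfl fun k _ => by ring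
  rw [h2, ff_cast]
  ring
end
end

section
/- Fix a nonzero real number λ and integers m ≥ 0, r ≥ 0. The real series Σ_{n=0}^{∞} (n+r)_{m,λ} (1/2)^{n+1} converges absolutely and its sum equals the degenerate r-Fubini number F^{(r)}_{m,λ} = F^{(r)}_{m,λ}(1) = Σ_{k=0}^{m} {m+r brace k+r}_{r,λ} k!. -/
open Finset

noncomputable section

lemma ff_nat (n k : ℕ) : ff (n : ℝ) k = (n.descFactorial k : ℝ) := by
  induction k with
  | zero => simp [ff]
  | succ k ih =>
    rw [ff, Finset.prod_range_succ, ← ff, ih, Nat.descFactorial_succ]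
    rcases le_or_gt (k + 1) n with h | h
    · push_cast [Nat.cast_sub (by omega : k ≤ n)]; ring
    · rcases Nat.lt_or_ge n k with h2 | h2
      · rw [Nat.descFactorial_eq_zero_iff_lt.2 h2]; simp
      · have : n = k := by omega
        subst this; simp

lemma hasSum_df (k : ℕ) :
    HasSum (fun n : ℕ => (n.descFactorial k : ℝ) * (1 / 2 : ℝ) ^ (n + 1)) k.factorial := by
  have hr : ‖(1/2 : ℝ)‖ < 1 := by rw [Real.norm_eq_abs]; rw [abs_of_pos] <;> norm_num
  have h := (hasSum_choose_mul_geometric_of_norm_lt_one k hr).mul_right ((1/2:ℝ) ^ (k+1))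
  have h2 : HasSum (fun n : ℕ => (((n + k).choose k : ℝ)) * (1/2:ℝ) ^ (n + k + 1)) 1 := by
    convert h using 2 with n
    · rfl
    · rw [mul_assoc, ← pow_add]; ring_nf
    · norm_num
  have h3 : HasSum (fun n : ℕ => ((n.choose k : ℝ)) * (1/2:ℝ) ^ (n + 1)) 1 := by
    have h4 := (hasSum_nat_add_iff (f := fun n : ℕ => ((n.choose k : ℝ)) * (1/2:ℝ) ^ (n + 1)) k).1 h2
    have h5 : ∑ i ∈ Finset.range k, ((i.choose k : ℝ)) * (1/2:ℝ) ^ (i + 1) = 0 := by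
      refine Finset.sum_eq_zero fun i hi => ?_
      rw [Nat.choose_eq_zero_of_lt (Finset.mem_range.1 hi)]
      simp
    rwa [h5, add_zero] at h4
  have := h3.mul_left (k.factorial : ℝ)
  rw [mul_one] at this
  convert this using 2 with n
  · rfl
  rw [Nat.descFactorial_eq_factorial_mul_choose]
  push_cast; ring

theorem statement_7 (lam : ℝ) (hlam : lam ≠ 0) (m r : ℕ)
    (S : ℕ → ℕ → ℝ)
    (hS : ∀ (n : ℕ) (x : ℝ), dff lam (x + r) n = ∑ k ∈ Finset.range (n + 1), S n k * ff x k) :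
    Summable (fun n : ℕ => |dff lam ((n : ℝ) + r) m * (1 / 2 : ℝ) ^ (n + 1)|) ∧
    ∑' n : ℕ, dff lam ((n : ℝ) + r) m * (1 / 2 : ℝ) ^ (n + 1) =
      ∑ k ∈ Finset.range (m + 1), S m k * k.factorial := by
  have key : HasSum (fun n : ℕ => dff lam ((n : ℝ) + r) m * (1 / 2 : ℝ) ^ (n + 1))
      (∑ k ∈ Finset.range (m + 1), S m k * k.factorial) := by
    have h : ∀ n : ℕ, dff lam ((n : ℝ) + r) m * (1 / 2 : ℝ) ^ (n + 1) =
        ∑ k ∈ Finset.range (m + 1),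
          S m k * ((n.descFactorial k : ℝ) * (1 / 2 : ℝ) ^ (n + 1)) := by
      intro n
      rw [hS m (n : ℝ), Finset.sum_mul]
      exact Finset.sum_congr rfl fun k _ => by rw [ff_nat]; ring
    have := hasSum_sum (f := fun k (n : ℕ) =>
        S m k * ((n.descFactorial k : ℝ) * (1 / 2 : ℝ) ^ (n + 1)))
      (s := Finset.range (m + 1)) (a := fun k => S m k * k.factorial)
      (fun k _ => (hasSum_df k).mul_left (S m k))
    exact this.congr_fun h
  exact ⟨summable_abs_iff.2 key.summable, key.tsum_eq⟩
end
end

section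
/- Fix a nonzero real number λ and integers k ≥ 0, r ≥ 0. In ℝ[[t]]: (1/k!) · (−log_λ(1−t))^k · (1−t)^{−r} = Σ_{n=k}^{∞} [n+r brack k+r]_{r,λ} t^n / n!, i.e., for every n ≥ k, n! times the coefficient of t^n in (−log_λ(1−t))^k (1−t)^{−r} / k! equals the degenerate unsigned r-Stirling number of the first kind [n+r brack k+r]_{r,λ}, and the coefficients vanish for n < k. -/
open Finset PowerSeries

noncomputable section

/-- The generalized binomial coefficient `C(x,k) = x(x-1)⋯(x-k+1)/k!`. -/
def gbinom (x : ℝ) (k : ℕ) : ℝ := (∏ i ∈ Finset.range k, (x - i)) / k.factorial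

/-- The degenerate logarithm evaluated at `1 - t`: the formal power series
`log_λ(1-t) = ∑_{n≥1} (1/λ) C(λ,n) (-t)^n` in `ℝ[[t]]`. -/
def dlogNeg (lam : ℝ) : PowerSeries ℝ :=
  PowerSeries.mk fun n => if n = 0 then 0 else (-1 : ℝ) ^ n * (1 / lam) * gbinom lam n

/-- The rising factorial `⟨x⟩_n = x(x+1)⋯(x+n-1)`. -/
def rise (x : ℝ) (n : ℕ) : ℝ := ∏ i ∈ Finset.range n, (x + i)

/-- The degenerate rising factorial `⟨x⟩_{n,λ} = x(x+λ)⋯(x+(n-1)λ)`. -/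
def drise (lam x : ℝ) (n : ℕ) : ℝ := ∏ i ∈ Finset.range n, (x + i * lam)

/-- drise as a polynomial -/
def driseP (lam : ℝ) (n : ℕ) : Polynomial ℝ :=
  ∏ i ∈ Finset.range n, (Polynomial.X + Polynomial.C ((i : ℝ) * lam))

lemma driseP_monic (lam : ℝ) (n : ℕ) : (driseP lam n).Monic :=
  Polynomial.monic_prod_of_monic _ _ fun i _ => Polynomial.monic_X_add_C _

lemma driseP_natDegree (lam : ℝ) (n : ℕ) : (driseP lam n).natDegree = n := by
  rw [driseP, Polynomial.natDegree_prod]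
  · have h : ∀ i ∈ Finset.range n, (Polynomial.X + Polynomial.C ((i:ℝ)*lam)).natDegree = 1 :=
      fun i _ => Polynomial.natDegree_X_add_C _
    rw [Finset.sum_congr rfl h]
    simp
  · intro i _
    exact (Polynomial.monic_X_add_C _).ne_zero

lemma driseP_eval (lam x : ℝ) (n : ℕ) : (driseP lam n).eval x = drise lam x n := by
  simp [driseP, drise, Polynomial.eval_prod]

lemma drise_zero (lam x : ℝ) : drise lam x 0 = 1 := by simp [drise]

/-- uniqueness of coefficients in a drise expansion -/
lemma drise_unique (lam : ℝ) : ∀ (m : ℕ) (c : ℕ → ℝ),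
    (∀ x : ℝ, ∑ j ∈ Finset.range (m + 1), c j * drise lam x j = 0) →
    ∀ j ≤ m, c j = 0 := by
  intro m
  induction m with
  | zero =>
    intro c hc j hj
    interval_cases j
    have := hc 0
    simpa [drise_zero] using this
  | succ m ih =>
    intro c hc j hj
    -- first show c (m+1) = 0 via polynomials
    have hP : (∑ j ∈ Finset.range (m + 2), Polynomial.C (c j) * driseP lam j) = 0 := by
      apply Polynomial.funext
      intro x
      simpa [Polynomial.eval_finset_sum, driseP_eval] using hc x
    have htop : c (m + 1) = 0 := by
      have h1 := congrArg (fun p => Polynomial.coeff p (m + 1)) hP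
      simp only [Polynomial.finset_sum_coeff, Polynomial.coeff_zero] at h1
      rw [Finset.sum_range_succ] at h1
      have h2 : ∀ j ∈ Finset.range (m + 1),
          (Polynomial.C (c j) * driseP lam j).coeff (m + 1) = 0 := by
        intro j hj'
        rw [Polynomial.coeff_C_mul]
        rw [Polynomial.coeff_eq_zero_of_natDegree_lt, mul_zero]
        rw [driseP_natDegree]
        exact Finset.mem_range.mp hj'
      rw [Finset.sum_eq_zero h2, zero_add, Polynomial.coeff_C_mul] at h1
      have h3 : (driseP lam (m+1)).coeff (m+1) = 1 := by
        have := (driseP_monic lam (m+1)).coeff_natDegree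
        rwa [driseP_natDegree] at this
      rw [h3, mul_one] at h1
      exact h1
    rcases Nat.lt_succ_iff_lt_or_eq.mp (Nat.lt_succ_of_le hj) with h | h
    · refine ih c ?_ j (Nat.lt_succ_iff.mp h)
      intro x
      have := hc x
      rwa [Finset.sum_range_succ, htop, zero_mul, add_zero] at this
    · rw [h]; exact htop

lemma drise_succ (lam x : ℝ) (j : ℕ) :
    drise lam x (j + 1) = drise lam x j * (x + j * lam) := Finset.prod_range_succ _ _

lemma rise_succ (x : ℝ) (j : ℕ) :
    rise x (j + 1) = rise x j * (x + j) := Finset.prod_range_succ _ _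

lemma B_rec (lam : ℝ) (r : ℕ) (B : ℕ → ℕ → ℝ)
    (hB : ∀ (n : ℕ) (x : ℝ),
      rise (x + r) n = ∑ j ∈ Finset.range (n + 1), B n j * drise lam x j)
    (n : ℕ) : ∀ j ≤ n + 1,
    B (n+1) j = (if 1 ≤ j then B n (j-1) else 0) +
      (if j ≤ n then ((n:ℝ) + r - lam * j) * B n j else 0) := by
  set c : ℕ → ℝ := fun j => B (n+1) j - ((if 1 ≤ j then B n (j-1) else 0) +
      (if j ≤ n then ((n:ℝ) + r - lam * j) * B n j else 0)) with hc
  have key : ∀ x : ℝ, ∑ j ∈ Finset.range (n + 2), c j * drise lam x j = 0 := by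
    intro x
    have expand : ∀ j, c j * drise lam x j = B (n+1) j * drise lam x j
        - (if 1 ≤ j then B n (j-1) else 0) * drise lam x j
        - (if j ≤ n then ((n:ℝ) + r - lam * j) * B n j else 0) * drise lam x j := by
      intro j; rw [hc]; ring
    rw [Finset.sum_congr rfl fun j _ => expand j]
    rw [Finset.sum_sub_distrib, Finset.sum_sub_distrib]
    have e1 : ∑ j ∈ Finset.range (n + 2), B (n+1) j * drise lam x j
        = rise (x + r) (n + 1) := (hB (n+1) x).symm
    have e2 : ∑ j ∈ Finset.range (n + 2),
        (if 1 ≤ j then B n (j-1) else 0) * drise lam x j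
        = ∑ j ∈ Finset.range (n + 1), B n j * drise lam x (j + 1) := by
      rw [Finset.sum_range_succ']
      simp
    have e3 : ∑ j ∈ Finset.range (n + 2),
        (if j ≤ n then ((n:ℝ) + r - lam * j) * B n j else 0) * drise lam x j
        = ∑ j ∈ Finset.range (n + 1),
            ((n:ℝ) + r - lam * j) * B n j * drise lam x j := by
      rw [Finset.sum_range_succ]
      simp only [Nat.lt_irrefl, if_neg (Nat.not_succ_le_self n), zero_mul, add_zero]
      apply Finset.sum_congr rfl
      intro j hj
      rw [if_pos (Nat.lt_succ_iff.mp (Finset.mem_range.mp hj))]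
    rw [e1, e2, e3]
    have e4 : rise (x + r) (n + 1)
        = ∑ j ∈ Finset.range (n + 1), B n j * drise lam x j * (x + r + n) := by
      rw [rise_succ, hB n x, Finset.sum_mul]
    rw [e4]
    rw [sub_sub, ← Finset.sum_add_distrib, ← Finset.sum_sub_distrib]
    apply Finset.sum_eq_zero
    intro j hj
    rw [drise_succ]
    push_cast
    ring
  intro j hj
  have h0 := drise_unique lam (n+1) c key j hj
  have h1 : B (n+1) j - ((if 1 ≤ j then B n (j-1) else 0) +
      (if j ≤ n then ((n:ℝ) + r - lam * j) * B n j else 0)) = 0 := h0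
  linarith


lemma coeff_F (lam : ℝ) (n : ℕ) :
    PowerSeries.coeff n (-dlogNeg lam) =
      if n = 0 then 0 else (-1 : ℝ) ^ (n+1) * (1 / lam) * gbinom lam n := by
  rw [map_neg, dlogNeg, PowerSeries.coeff_mk]
  split_ifs with h
  · simp
  · ring

lemma gbinom_succ (lam : ℝ) (m : ℕ) :
    gbinom lam (m+1) * ((m:ℝ) + 1) = gbinom lam m * (lam - m) := by
  rw [gbinom, gbinom, Finset.prod_range_succ, Nat.factorial_succ]
  have hm : ((m:ℝ) + 1) ≠ 0 := by positivity
  have hf : ((m.factorial : ℝ)) ≠ 0 := Nat.cast_ne_zero.mpr m.factorial_ne_zero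
  field_simp
  push_cast
  ring

lemma key1 (lam : ℝ) (hlam : lam ≠ 0) :
    (1 - X : PowerSeries ℝ) * (PowerSeries.derivative ℝ (-dlogNeg lam)) =
      1 - lam • (-dlogNeg lam) := by
  ext n
  rw [sub_mul, one_mul, map_sub, map_sub, PowerSeries.coeff_smul, PowerSeries.coeff_one,
    smul_eq_mul]
  cases n with
  | zero =>
    rw [PowerSeries.coeff_derivative, mul_comm X, PowerSeries.coeff_zero_mul_X]
    norm_num [coeff_F]
    have hg : gbinom lam 1 = lam := by simp [gbinom]
    rw [hg]
    field_simp
  | succ n =>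
    rw [PowerSeries.coeff_derivative, PowerSeries.coeff_succ_X_mul,
      PowerSeries.coeff_derivative]
    simp only [coeff_F, Nat.succ_ne_zero, if_false, Nat.add_one_ne_zero, if_neg]
    have h := gbinom_succ lam (n+1)
    push_cast at h ⊢
    have hne : ((n:ℝ) + 1 + 1) ≠ 0 := by positivity
    have h2 : gbinom lam (n+1+1) = gbinom lam (n+1) * (lam - ((n:ℝ)+1)) / ((n:ℝ)+1+1) := by
      rw [eq_div_iff hne]
      exact h
    rw [h2]
    field_simp
    ring

lemma gS_cancel : (1 - X : PowerSeries ℝ) * (1 - X : PowerSeries ℝ)⁻¹ = 1 :=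
  PowerSeries.mul_inv_cancel _ (by simp)

lemma dS_eq : PowerSeries.derivative ℝ ((1 - X : PowerSeries ℝ)⁻¹)
    = ((1 - X : PowerSeries ℝ)⁻¹)^2 := by
  rw [PowerSeries.derivative_inv', map_sub, PowerSeries.derivative_X,
    Derivation.map_one_eq_zero]
  ring

lemma grec (lam : ℝ) (hlam : lam ≠ 0) (r k : ℕ) :
    (1 - X : PowerSeries ℝ) * PowerSeries.derivative ℝ
        ((-dlogNeg lam)^k * ((1 - X : PowerSeries ℝ)⁻¹)^r)
    = (k : PowerSeries ℝ) * ((-dlogNeg lam)^(k-1) * ((1 - X : PowerSeries ℝ)⁻¹)^r)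
      + (PowerSeries.C ((r:ℝ) - lam * k)) *
          ((-dlogNeg lam)^k * ((1 - X : PowerSeries ℝ)⁻¹)^r) := by
  have hs : (1 - X : PowerSeries ℝ) * (1 - X : PowerSeries ℝ)⁻¹ = 1 := gS_cancel
  have hk : (1 - X : PowerSeries ℝ) * PowerSeries.derivative ℝ (-dlogNeg lam)
      = 1 - PowerSeries.C lam * (-dlogNeg lam) := by
    rw [← smul_eq_C_mul]; exact key1 lam hlam
  rw [Derivation.leibniz, Derivation.leibniz_pow, Derivation.leibniz_pow, dS_eq]
  simp only [smul_eq_mul, nsmul_eq_mul, map_sub, map_mul, map_natCast]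
  cases k with
  | zero =>
    cases r with
    | zero => simp
    | succ r' =>
      push_cast
      simp only [pow_succ]
      linear_combination ((r' : PowerSeries ℝ)+1) *
        ((-dlogNeg lam)^0 * ((1 - X : PowerSeries ℝ)⁻¹)^r' *
          ((1 - X : PowerSeries ℝ)⁻¹)) * hs
  | succ k' =>
    cases r with
    | zero =>
      push_cast
      simp only [pow_succ, Nat.add_sub_cancel]
      linear_combination ((k' : PowerSeries ℝ)+1) * ((-dlogNeg lam)^k') * hk
    | succ r' =>
      push_cast
      simp only [pow_succ, Nat.add_sub_cancel]
      linear_combination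
        ((r' : PowerSeries ℝ)+1) * ((-dlogNeg lam)^(k'+1) *
          ((1 - X : PowerSeries ℝ)⁻¹)^r' * ((1 - X : PowerSeries ℝ)⁻¹)) * hs
        + ((k' : PowerSeries ℝ)+1) * ((-dlogNeg lam)^k' *
          ((1 - X : PowerSeries ℝ)⁻¹)^(r'+1)) * hk

lemma coeff_rec (lam : ℝ) (hlam : lam ≠ 0) (r k n : ℕ) :
    ((n:ℝ)+1) * PowerSeries.coeff (n+1)
        ((-dlogNeg lam)^k * ((1 - X : PowerSeries ℝ)⁻¹)^r)
    = (k:ℝ) * PowerSeries.coeff n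
        ((-dlogNeg lam)^(k-1) * ((1 - X : PowerSeries ℝ)⁻¹)^r)
      + ((n:ℝ) + (r:ℝ) - lam*(k:ℝ)) * PowerSeries.coeff n
        ((-dlogNeg lam)^k * ((1 - X : PowerSeries ℝ)⁻¹)^r) := by
  have h := congrArg (PowerSeries.coeff n) (grec lam hlam r k)
  set g := (-dlogNeg lam)^k * ((1 - X : PowerSeries ℝ)⁻¹)^r with hg
  set g' := (-dlogNeg lam)^(k-1) * ((1 - X : PowerSeries ℝ)⁻¹)^r with hg'
  rw [sub_mul, one_mul, map_add, map_sub] at h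
  rw [show ((k : PowerSeries ℝ) * g') = PowerSeries.C ((k:ℕ):ℝ) * g' by
    rw [map_natCast], PowerSeries.coeff_C_mul, PowerSeries.coeff_C_mul,
    PowerSeries.coeff_derivative] at h
  have hX : PowerSeries.coeff n (X * PowerSeries.derivative ℝ g)
      = (n:ℝ) * PowerSeries.coeff n g := by
    cases n with
    | zero => rw [mul_comm, PowerSeries.coeff_zero_mul_X]; simp
    | succ m =>
      rw [PowerSeries.coeff_succ_X_mul, PowerSeries.coeff_derivative]
      push_cast
      ring
  rw [hX] at h
  push_cast at h ⊢
  linarith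

lemma main_lemma (lam : ℝ) (hlam : lam ≠ 0) (r : ℕ) (B : ℕ → ℕ → ℝ)
    (hB : ∀ (n : ℕ) (x : ℝ),
      rise (x + r) n = ∑ j ∈ Finset.range (n + 1), B n j * drise lam x j) :
    ∀ n k, (n.factorial : ℝ) *
        PowerSeries.coeff n ((-dlogNeg lam)^k * ((1 - X : PowerSeries ℝ)⁻¹)^r)
      = if k ≤ n then (k.factorial : ℝ) * B n k else 0 := by
  have hB00 : B 0 0 = 1 := by
    have h := hB 0 0
    simp [rise, drise] at h
    linarith
  intro n
  induction n with
  | zero =>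
    intro k
    rw [PowerSeries.coeff_zero_eq_constantCoeff, map_mul, map_pow, map_pow]
    have hF0 : PowerSeries.constantCoeff (-dlogNeg lam) = 0 := by
      rw [← PowerSeries.coeff_zero_eq_constantCoeff]
      simp [coeff_F]
    have hS0 : PowerSeries.constantCoeff ((1 - X : PowerSeries ℝ)⁻¹) = 1 := by
      rw [PowerSeries.constantCoeff_inv]
      simp
    rw [hF0, hS0, one_pow, mul_one]
    cases k with
    | zero => simp [hB00]
    | succ k' => simp [zero_pow]
  | succ n ih =>
    intro k
    have hrec := coeff_rec lam hlam r k n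
    have hBr := B_rec lam r B hB n
    have e : (((n+1).factorial : ℝ)) *
        PowerSeries.coeff (n+1) ((-dlogNeg lam)^k * ((1 - X : PowerSeries ℝ)⁻¹)^r)
        = (k:ℝ) * ((n.factorial : ℝ) *
            PowerSeries.coeff n ((-dlogNeg lam)^(k-1) * ((1 - X : PowerSeries ℝ)⁻¹)^r))
          + ((n:ℝ) + (r:ℝ) - lam*(k:ℝ)) * ((n.factorial : ℝ) *
            PowerSeries.coeff n ((-dlogNeg lam)^k * ((1 - X : PowerSeries ℝ)⁻¹)^r)) := by
      rw [Nat.factorial_succ]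
      push_cast
      linear_combination ((n.factorial : ℝ)) * hrec
    rw [ih, ih] at e
    rw [e]
    cases k with
    | zero =>
      have hb := hBr 0 (Nat.zero_le _)
      simp only [if_neg (by norm_num : ¬ (1:ℕ) ≤ 0), if_pos (Nat.zero_le n), zero_add] at hb
      simp only [Nat.zero_le, if_pos, Nat.cast_zero, Nat.factorial_zero, Nat.cast_one]
      rw [hb]
      push_cast
      ring
    | succ k' =>
      rw [Nat.succ_sub_one] at *
      rcases lt_trichotomy (k'+1) (n+1) with hlt | heq | hgt
      · have hk'n : k' ≤ n := by omega
        have hkn : k' + 1 ≤ n := by omega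
        have hb := hBr (k'+1) (by omega)
        simp only [if_pos (by omega : 1 ≤ k'+1), if_pos hkn, Nat.add_sub_cancel] at hb
        rw [if_pos hk'n, if_pos hkn, if_pos (by omega : k'+1 ≤ n+1), hb,
          Nat.factorial_succ k']
        push_cast
        ring
      · have hkn : ¬ (k' + 1 ≤ n) := by omega
        have hk'n : k' ≤ n := by omega
        have hb := hBr (k'+1) (by omega)
        simp only [if_pos (by omega : 1 ≤ k'+1), if_neg hkn, Nat.add_sub_cancel,
          add_zero] at hb
        rw [if_pos hk'n, if_neg hkn, mul_zero, add_zero, if_pos (by omega : k'+1 ≤ n+1), hb,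
          Nat.factorial_succ k']
        have hk'e : k' = n := by omega
        subst hk'e
        push_cast
        ring
      · have h1 : ¬ (k' ≤ n) := by omega
        have h2 : ¬ (k'+1 ≤ n) := by omega
        have h3 : ¬ (k'+1 ≤ n+1) := by omega
        rw [if_neg h1, if_neg h2, mul_zero, mul_zero, add_zero, if_neg h3]

/-- in `ℝ[[t]]`,
`(1/k!) (-log_λ(1-t))^k (1-t)^{-r} = ∑_{n=k}^∞ [n+r brack k+r]_{r,λ} t^n / n!`,
where `B n k` denotes the degenerate unsigned `r`-Stirling number of the first kind
`[n+r brack k+r]_{r,λ}`, characterized by `⟨x+r⟩_n = ∑_{k=0}^n B n k ⟨x⟩_{k,λ}`;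
the coefficients of `t^n` for `n < k` vanish. -/
theorem statement_19 (lam : ℝ) (hlam : lam ≠ 0) (k r : ℕ)
    (B : ℕ → ℕ → ℝ)
    (hB : ∀ (n : ℕ) (x : ℝ),
      rise (x + r) n = ∑ j ∈ Finset.range (n + 1), B n j * drise lam x j) :
    ((k.factorial : ℝ))⁻¹ •
        ((-dlogNeg lam) ^ k * ((1 - PowerSeries.X : PowerSeries ℝ)⁻¹) ^ r) =
      PowerSeries.mk fun n => if k ≤ n then B n k / n.factorial else 0 := by
  ext n
  rw [PowerSeries.coeff_smul, PowerSeries.coeff_mk, smul_eq_mul]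
  have h := main_lemma lam hlam r B hB n k
  have hnf : ((n.factorial : ℝ)) ≠ 0 := Nat.cast_ne_zero.mpr n.factorial_ne_zero
  have hkf : ((k.factorial : ℝ)) ≠ 0 := Nat.cast_ne_zero.mpr k.factorial_ne_zero
  split_ifs with hkn
  · rw [if_pos hkn] at h
    have hc : PowerSeries.coeff n ((-dlogNeg lam) ^ k *
        ((1 - PowerSeries.X : PowerSeries ℝ)⁻¹) ^ r)
        = (k.factorial : ℝ) * B n k / n.factorial := by
      rw [eq_div_iff hnf]
      linarith [h]
    rw [hc]
    field_simp
  · rw [if_neg hkn] at h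
    have hc : PowerSeries.coeff n ((-dlogNeg lam) ^ k *
        ((1 - PowerSeries.X : PowerSeries ℝ)⁻¹) ^ r) = 0 := by
      have := mul_eq_zero.mp h
      tauto
    rw [hc, mul_zero]
end
end
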